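/- Let E and G be real Banach spaces with E separable, and let X := E* and Y := G* be their dual spaces; say a sequence (uₙ) in X converges weakly-* to u if uₙ(e) → u(e) for all e ∈ E (and analogously in Y). Let A : X → Y be a bounded linear map and B : X × X → Y a bounded symmetric bilinear map, set K(u) := A(u) + B(u, u), and assume K is sequentially weak-*-to-weak-* continuous. Let R : X → [0, +∞] be proper and sequentially weak-* lower semicontinuous, let p ≥ 1, α > 0 and g^δ ∈ Y, and define the Tikhonov functional J_α(u) := ‖K(u) − g^δ‖^p + α R(u). If J_α is coercive, i.e. J_α(uₙ) → +∞ for every sequence with ‖uₙ‖ → +∞, then J_α attains its minimum: there exists u_α ∈ X with J_α(u_α) ≤ J_α(u) for all u ∈ X. (Well-posedness of the dilinear Tikhonov regularization.) -/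

import Mathlib

open Filter
open scoped ENNReal Topology

/-- Sequential weak-* convergence in the dual of a Banach space `E`. -/
def WeakStarSeqTendsto {E : Type*} [NormedAddCommGroup E] [NormedSpace ℝ E]
    (un : ℕ → (E →L[ℝ] ℝ)) (u : E →L[ℝ] ℝ) : Prop :=
  ∀ e : E, Tendsto (fun n => un n e) atTop (𝓝 (u e))

/-- Sequential Banach–Alaoglu: a norm-bounded sequence in the dual of a separable
normed space has a weak-* convergent subsequence. -/
lemma seq_banach_alaoglu {E : Type*} [NormedAddCommGroup E] [NormedSpace ℝ E]
    [TopologicalSpace.SeparableSpace E]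
    (un : ℕ → (E →L[ℝ] ℝ)) {C : ℝ} (hC : ∀ n, ‖un n‖ ≤ C) :
    ∃ u : E →L[ℝ] ℝ, ∃ φ : ℕ → ℕ, StrictMono φ ∧
      WeakStarSeqTendsto (fun k => un (φ k)) u := by
  have hC0 : 0 ≤ C := (norm_nonneg _).trans (hC 0)
  have : Nonempty E := ⟨0⟩
  obtain ⟨e, he⟩ := TopologicalSpace.exists_dense_seq E
  -- the sequence of restrictions to the dense sequence lives in a compact subset of `ℕ → ℝ`
  set S : Set (ℕ → ℝ) := Set.pi Set.univ fun k => Metric.closedBall (0 : ℝ) (C * ‖e k‖) with hS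
  have hScpt : IsCompact S := isCompact_univ_pi fun k => isCompact_closedBall _ _
  have hmem : ∀ n, (fun k => un n (e k)) ∈ S := by
    intro n k _
    simp only [Metric.mem_closedBall, dist_zero_right]
    calc ‖un n (e k)‖ ≤ ‖un n‖ * ‖e k‖ := (un n).le_opNorm _
      _ ≤ C * ‖e k‖ := by gcongr; exact hC n
  obtain ⟨f, -, φ, hφ, hconv⟩ := hScpt.isSeqCompact (fun n => hmem n)
  have hconv' : ∀ k, Tendsto (fun n => un (φ n) (e k)) atTop (𝓝 (f k)) := by
    intro k
    exact (tendsto_pi_nhds.1 hconv) k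
  -- each evaluation sequence is Cauchy
  have hcauchy : ∀ v : E, CauchySeq (fun n => un (φ n) v) := by
    intro v
    rw [Metric.cauchySeq_iff]
    intro ε hε
    have hδ : 0 < ε / (3 * (C + 1)) := by positivity
    obtain ⟨k, hk⟩ := he.exists_dist_lt v hδ
    obtain ⟨N, hN⟩ := Metric.cauchySeq_iff.1 (hconv' k).cauchySeq (ε / 3) (by positivity)
    refine ⟨N, fun m hm n hn => ?_⟩
    have key : ∀ j, dist (un (φ j) v) (un (φ j) (e k)) < ε / 3 := by
      intro j
      calc dist (un (φ j) v) (un (φ j) (e k))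
          ≤ ‖un (φ j)‖ * dist v (e k) := (un (φ j)).dist_le_opNorm _ _
        _ ≤ C * dist v (e k) := mul_le_mul_of_nonneg_right (hC _) dist_nonneg
        _ < (C + 1) * (ε / (3 * (C + 1))) := by
            apply mul_lt_mul' (by linarith) hk dist_nonneg (by linarith)
        _ = ε / 3 := by field_simp
    calc dist (un (φ m) v) (un (φ n) v)
        ≤ dist (un (φ m) v) (un (φ m) (e k)) + dist (un (φ m) (e k)) (un (φ n) (e k)) +
          dist (un (φ n) (e k)) (un (φ n) v) := dist_triangle4 _ _ _ _
      _ < ε / 3 + ε / 3 + ε / 3 := by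
          have := hN m hm n hn
          have h1 := key m
          have h2 := key n
          rw [dist_comm] at h2
          linarith
      _ = ε := by ring
  have hlim : ∀ v : E, ∃ L : ℝ, Tendsto (fun n => un (φ n) v) atTop (𝓝 L) := fun v =>
    cauchySeq_tendsto_of_complete (hcauchy v)
  choose g hg using hlim
  have htends : Tendsto (fun n (v : E) => un (φ n) v) atTop (𝓝 g) :=
    tendsto_pi_nhds.2 hg
  have hbdd : Bornology.IsBounded (Set.range fun n => un (φ n)) := by
    rw [Metric.isBounded_iff_subset_closedBall 0]
    exact ⟨C, by rintro - ⟨n, rfl⟩; simpa [dist_zero_right] using hC (φ n)⟩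
  refine ⟨ContinuousLinearMap.ofTendstoOfBoundedRange g _ htends hbdd, φ, hφ, ?_⟩
  intro v
  simpa using hg v

/-- Superadditivity of `liminf` in `ℝ≥0∞`. -/
lemma ennreal_liminf_add_le_aux {a b : ℕ → ℝ≥0∞} :
    liminf a atTop + liminf b atTop ≤ liminf (fun k => a k + b k) atTop := by
  set L := liminf (fun k => a k + b k) atTop with hL
  have hA : liminf a atTop ≤ L :=
    liminf_le_liminf (Eventually.of_forall fun k => le_self_add)
  have hB : liminf b atTop ≤ L :=
    liminf_le_liminf (Eventually.of_forall fun k => le_add_self)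
  rcases eq_or_ne (liminf a atTop) ⊤ with h | hAtop
  · rw [h, top_add]
    exact h ▸ hA
  rcases eq_or_ne (liminf b atTop) ⊤ with h | hBtop
  · rw [h, add_top]
    exact h ▸ hB
  rcases eq_or_ne (liminf a atTop) 0 with h | hA0
  · rw [h, zero_add]; exact hB
  rcases eq_or_ne (liminf b atTop) 0 with h | hB0
  · rw [h, add_zero]; exact hA
  refine ENNReal.le_of_forall_pos_le_add fun ε hε _ => ?_
  set δ : ℝ≥0∞ := (ε : ℝ≥0∞) / 2 with hδ
  have hδ0 : δ ≠ 0 := by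
    simp only [hδ, Ne, ENNReal.div_eq_zero_iff, ENNReal.coe_eq_zero, ENNReal.ofNat_ne_top,
      or_false]
    exact_mod_cast hε.ne'
  have h1 : ∀ᶠ k in atTop, liminf a atTop - δ < a k :=
    eventually_lt_of_lt_liminf (ENNReal.sub_lt_self hAtop hA0 hδ0)
  have h2 : ∀ᶠ k in atTop, liminf b atTop - δ < b k :=
    eventually_lt_of_lt_liminf (ENNReal.sub_lt_self hBtop hB0 hδ0)
  have hsum : (liminf a atTop - δ) + (liminf b atTop - δ) ≤ L :=
    le_liminf_of_le (by isBoundedDefault)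
      ((h1.and h2).mono fun k hk => add_le_add hk.1.le hk.2.le)
  calc liminf a atTop + liminf b atTop
      ≤ ((liminf a atTop - δ) + δ) + ((liminf b atTop - δ) + δ) :=
        add_le_add le_tsub_add le_tsub_add
    _ = ((liminf a atTop - δ) + (liminf b atTop - δ)) + (δ + δ) := by ring
    _ ≤ L + (ε : ℝ≥0∞) := add_le_add hsum (le_of_eq (ENNReal.add_halves _))

set_option maxHeartbeats 1000000 in
/-- **Well-posedness of the dilinear Tikhonov regularization.**
Let `E`, `G` be real Banach spaces with `E` separable, `X := E*`, `Y := G*`.  Let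
`K u := A u + B u u` be a bounded dilinear map which is sequentially
weak-*-to-weak-* continuous, let `R : X → [0, ∞]` be proper and sequentially weak-*
lower semicontinuous, `p ≥ 1`, `α > 0`, `g^δ ∈ Y`, and suppose the Tikhonov functional
`J_α u = ‖K u − g^δ‖^p + α R u` is coercive.  Then `J_α` attains its minimum. -/
theorem dilinear_tikhonov_wellposed
    {E G : Type*} [NormedAddCommGroup E] [NormedSpace ℝ E] [CompleteSpace E]
    [TopologicalSpace.SeparableSpace E]
    [NormedAddCommGroup G] [NormedSpace ℝ G] [CompleteSpace G]
    (A : (E →L[ℝ] ℝ) →L[ℝ] (G →L[ℝ] ℝ))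
    (B : (E →L[ℝ] ℝ) →L[ℝ] (E →L[ℝ] ℝ) →L[ℝ] (G →L[ℝ] ℝ))
    (hBsymm : ∀ x y, B x y = B y x)
    (hK : ∀ (un : ℕ → (E →L[ℝ] ℝ)) (u : E →L[ℝ] ℝ), WeakStarSeqTendsto un u →
      ∀ g : G, Tendsto (fun n => (A (un n) + B (un n) (un n)) g) atTop
        (𝓝 ((A u + B u u) g)))
    (R : (E →L[ℝ] ℝ) → ℝ≥0∞) (hRproper : ∃ u, R u ≠ ⊤)
    (hRlsc : ∀ (un : ℕ → (E →L[ℝ] ℝ)) (u : E →L[ℝ] ℝ), WeakStarSeqTendsto un u →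
      R u ≤ liminf (fun n => R (un n)) atTop)
    (p : ℝ) (hp : 1 ≤ p) (α : ℝ) (hα : 0 < α) (gδ : G →L[ℝ] ℝ)
    (hcoercive : ∀ un : ℕ → (E →L[ℝ] ℝ),
      Tendsto (fun n => ‖un n‖) atTop atTop →
      Tendsto (fun n => ENNReal.ofReal (‖A (un n) + B (un n) (un n) - gδ‖ ^ p) +
        ENNReal.ofReal α * R (un n)) atTop (𝓝 ⊤)) :
    ∃ uα : E →L[ℝ] ℝ, ∀ u : E →L[ℝ] ℝ,
      ENNReal.ofReal (‖A uα + B uα uα - gδ‖ ^ p) + ENNReal.ofReal α * R uα ≤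
      ENNReal.ofReal (‖A u + B u u - gδ‖ ^ p) + ENNReal.ofReal α * R u := by
  have hp0 : (0:ℝ) < p := lt_of_lt_of_le one_pos hp
  set K : (E →L[ℝ] ℝ) → (G →L[ℝ] ℝ) := fun u => A u + B u u with hKdef
  set J : (E →L[ℝ] ℝ) → ℝ≥0∞ :=
    fun u => ENNReal.ofReal (‖K u - gδ‖ ^ p) + ENNReal.ofReal α * R u with hJdef
  set m : ℝ≥0∞ := ⨅ u, J u with hm
  -- the infimum is finite
  obtain ⟨u₀, hu₀⟩ := hRproper
  have hJu₀ : J u₀ ≠ ⊤ := by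
    simp only [hJdef, Ne, ENNReal.add_eq_top, not_or]
    exact ⟨ENNReal.ofReal_ne_top, ENNReal.mul_ne_top ENNReal.ofReal_ne_top hu₀⟩
  have hm_ne_top : m ≠ ⊤ := ne_top_of_le_ne_top hJu₀ (iInf_le _ u₀)
  -- a minimizing sequence
  set ε : ℕ → ℝ≥0∞ := fun n => ENNReal.ofReal (1 / ((n : ℝ) + 1)) with hε
  have hε0 : ∀ n, ε n ≠ 0 := by
    intro n
    simp only [hε, Ne, ENNReal.ofReal_eq_zero, not_le]
    positivity
  have hεanti : ∀ {j k : ℕ}, j ≤ k → ε k ≤ ε j := by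
    intro j k hjk
    apply ENNReal.ofReal_le_ofReal
    apply one_div_le_one_div_of_le (by positivity)
    have : (j : ℝ) ≤ k := Nat.cast_le.mpr hjk
    linarith
  have hε1 : ∀ n, ε n ≤ 1 := by
    intro n
    simpa [hε] using hεanti (Nat.zero_le n)
  have hεtend : Tendsto ε atTop (𝓝 0) := by
    rw [show (0:ℝ≥0∞) = ENNReal.ofReal 0 by simp]
    exact ENNReal.tendsto_ofReal tendsto_one_div_add_atTop_nhds_zero_nat
  have hchoice : ∀ n : ℕ, ∃ u, J u < m + ε n := by
    intro n
    exact iInf_lt_iff.mp (ENNReal.lt_add_right hm_ne_top (hε0 n))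
  choose un hun using hchoice
  -- the minimizing sequence is bounded
  have hbdd : ∃ C : ℝ, ∀ n, ‖un n‖ ≤ C := by
    by_contra h
    push_neg at h
    have h' : ∀ k : ℕ, ∃ n, (k : ℝ) < ‖un n‖ := fun k => h k
    choose ψ hψ using h'
    have htend : Tendsto (fun k => ‖un (ψ k)‖) atTop atTop :=
      tendsto_atTop_mono (fun k => (hψ k).le) tendsto_natCast_atTop_atTop
    have hco := hcoercive (fun k => un (ψ k)) htend
    have hlt : m + 1 < ⊤ := ENNReal.add_lt_top.2 ⟨hm_ne_top.lt_top, ENNReal.one_lt_top⟩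
    have hev : ∀ᶠ k in atTop, m + 1 <
        ENNReal.ofReal (‖A (un (ψ k)) + B (un (ψ k)) (un (ψ k)) - gδ‖ ^ p) +
          ENNReal.ofReal α * R (un (ψ k)) :=
      hco.eventually (isOpen_Ioi.eventually_mem (by simpa using hlt))
    obtain ⟨k, hk⟩ := hev.exists
    have : J (un (ψ k)) ≤ m + 1 :=
      le_trans (hun (ψ k)).le (add_le_add_right (hε1 _) m)
    exact absurd (lt_of_lt_of_le hk this) (lt_irrefl _)
  obtain ⟨C, hC⟩ := hbdd
  obtain ⟨u, φ, hφ, hweak⟩ := seq_banach_alaoglu un hC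
  set v : ℕ → (E →L[ℝ] ℝ) := fun k => un (φ k) with hv
  have hJv : ∀ k, J (v k) ≤ m + ε k :=
    fun k => le_trans (hun (φ k)).le (add_le_add_right (hεanti (hφ.le_apply)) m)
  -- weak-* convergence of K (v k) - gδ evaluated at each g
  have hKv : ∀ g : G, Tendsto (fun k => (K (v k) - gδ) g) atTop (𝓝 ((K u - gδ) g)) := by
    intro g
    simp only [ContinuousLinearMap.sub_apply]
    exact (hK v u hweak g).sub tendsto_const_nhds
  -- Step A : weak-* lower semicontinuity of the norm
  set c : ℝ≥0∞ := liminf (fun k => (‖K (v k) - gδ‖₊ : ℝ≥0∞)) atTop with hc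
  have hstepA : (‖K u - gδ‖₊ : ℝ≥0∞) ≤ c := by
    rcases eq_or_ne c ⊤ with hctop | hctop
    · exact hctop ▸ le_top
    have hkey : ∀ g : G, (‖(K u - gδ) g‖₊ : ℝ≥0∞) ≤ c * ‖g‖₊ := by
      intro g
      have h2 : Tendsto (fun k => (‖(K (v k) - gδ) g‖₊ : ℝ≥0∞)) atTop
          (𝓝 (‖(K u - gδ) g‖₊ : ℝ≥0∞)) := ENNReal.tendsto_coe.2 (hKv g).nnnorm
      have h2eq : liminf (fun k => (‖(K (v k) - gδ) g‖₊ : ℝ≥0∞)) atTop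
          = (‖(K u - gδ) g‖₊ : ℝ≥0∞) := h2.liminf_eq
      rw [← h2eq]
      calc liminf (fun k => (‖(K (v k) - gδ) g‖₊ : ℝ≥0∞)) atTop
          ≤ liminf (fun k => (‖g‖₊ : ℝ≥0∞) * (‖K (v k) - gδ‖₊ : ℝ≥0∞)) atTop :=
            liminf_le_liminf (Eventually.of_forall fun k => by
              rw [mul_comm]
              exact_mod_cast ENNReal.coe_le_coe.2 ((K (v k) - gδ).le_opNNNorm g))
        _ ≤ limsup (fun _ : ℕ => (‖g‖₊ : ℝ≥0∞)) atTop *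
              liminf (fun k => (‖K (v k) - gδ‖₊ : ℝ≥0∞)) atTop :=
            ENNReal.liminf_mul_le (Or.inr hctop) (Or.inl (by simp [ENNReal.coe_ne_top]))
        _ = (‖g‖₊ : ℝ≥0∞) * c := by rw [limsup_const]
        _ = c * ‖g‖₊ := mul_comm _ _
    have hnorm : ‖K u - gδ‖ ≤ c.toReal := by
      apply ContinuousLinearMap.opNorm_le_bound _ ENNReal.toReal_nonneg
      intro g
      have := hkey g
      rw [← ENNReal.coe_toNNReal hctop, ← ENNReal.coe_mul, ENNReal.coe_le_coe] at this
      calc ‖(K u - gδ) g‖ = (‖(K u - gδ) g‖₊ : ℝ) := (coe_nnnorm _).symm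
        _ ≤ (c.toNNReal : ℝ) * (‖g‖₊ : ℝ) := by exact_mod_cast this
        _ = c.toReal * ‖g‖ := by rw [coe_nnnorm]; rfl
    calc (‖K u - gδ‖₊ : ℝ≥0∞) = ENNReal.ofReal ‖K u - gδ‖ := (ofReal_norm _).symm
      _ ≤ ENNReal.ofReal c.toReal := ENNReal.ofReal_le_ofReal hnorm
      _ = c := ENNReal.ofReal_toReal hctop
  -- Step B : lsc of the `p`-th power of the norm
  have hstepB : ENNReal.ofReal (‖K u - gδ‖ ^ p) ≤
      liminf (fun k => ENNReal.ofReal (‖K (v k) - gδ‖ ^ p)) atTop := by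
    have hrw : ∀ w : G →L[ℝ] ℝ,
        ENNReal.ofReal (‖w‖ ^ p) = ((‖w‖₊ : ℝ≥0∞)) ^ p := by
      intro w
      rw [← ENNReal.ofReal_rpow_of_nonneg (norm_nonneg w) hp0.le, ofReal_norm, enorm_eq_nnnorm]
    simp only [hrw]
    calc (‖K u - gδ‖₊ : ℝ≥0∞) ^ p ≤ c ^ p := ENNReal.rpow_le_rpow hstepA hp0.le
      _ = liminf (fun k => (‖K (v k) - gδ‖₊ : ℝ≥0∞) ^ p) atTop := by
          have hiso : (ENNReal.orderIsoRpow p hp0)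
              (liminf (fun k => (‖K (v k) - gδ‖₊ : ℝ≥0∞)) atTop)
              = liminf (fun k =>
                  (ENNReal.orderIsoRpow p hp0) ((‖K (v k) - gδ‖₊ : ℝ≥0∞))) atTop :=
            OrderIso.liminf_apply _
          exact hiso
  -- Step C : lsc of the regularizing term
  have hstepC : ENNReal.ofReal α * R u ≤
      liminf (fun k => ENNReal.ofReal α * R (v k)) atTop := by
    calc ENNReal.ofReal α * R u
        ≤ ENNReal.ofReal α * liminf (fun k => R (v k)) atTop :=
          mul_le_mul_right (hRlsc v u hweak) _
      _ = liminf (fun _ : ℕ => ENNReal.ofReal α) atTop * liminf (fun k => R (v k)) atTop := by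
          rw [liminf_const]
      _ ≤ liminf (fun k => ENNReal.ofReal α * R (v k)) atTop := ENNReal.le_liminf_mul
  -- Combine
  have hJum : J u ≤ m := by
    calc J u ≤ liminf (fun k => ENNReal.ofReal (‖K (v k) - gδ‖ ^ p)) atTop +
          liminf (fun k => ENNReal.ofReal α * R (v k)) atTop := add_le_add hstepB hstepC
      _ ≤ liminf (fun k => ENNReal.ofReal (‖K (v k) - gδ‖ ^ p) +
            ENNReal.ofReal α * R (v k)) atTop := ennreal_liminf_add_le_aux
      _ = liminf (fun k => J (v k)) atTop := rfl
      _ ≤ liminf (fun k => m + ε k) atTop :=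
          liminf_le_liminf (Eventually.of_forall hJv)
      _ = m := by
          have : Tendsto (fun k => m + ε k) atTop (𝓝 (m + 0)) :=
            tendsto_const_nhds.add hεtend
          rw [this.liminf_eq, add_zero]
  exact ⟨u, fun w => le_trans hJum (iInf_le _ w)⟩
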